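/- There exists a Lipschitz bijection Φ of the closed unit square Ω = [0,1]² onto itself such that Φ does not map the vertex set of the square onto itself; in particular there is a Lipschitz homeomorphism of the square with Φ((1,1)) = (1, 1/2). (Hence the vertex-preservation property of diffeomorphisms of polytopes fails for general Lipschitz bijections.) -/

import Mathlib

/-- The closed unit square. -/
def unitSq : Set (ℝ × ℝ) := {x | x.1 ∈ Set.Icc (0:ℝ) 1 ∧ x.2 ∈ Set.Icc (0:ℝ) 1}

/-- The vertex set of the unit square. -/
def sqVertices : Set (ℝ × ℝ) := {(0, 0), (1, 0), (0, 1), (1, 1)}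

/-- The forward map: a piecewise-linear fan from the origin, written via min/max. -/
noncomputable def PhiF : ℝ × ℝ → ℝ × ℝ := fun x =>
  (max (1*x.1+0*x.2) (min (0*x.1+1*x.2) ((4/3)*x.1+0*x.2)),
   min (0*x.1+1*x.2) (max (0*x.1+(1/2)*x.2) ((-2)*x.1+(5/2)*x.2)))

/-- The inverse map, also written via min/max. -/
noncomputable def GF : ℝ × ℝ → ℝ × ℝ := fun y =>
  (min (1*y.1+0*y.2) (max ((3/4)*y.1+0*y.2) ((5/4)*y.1+(-(1/2))*y.2)),
   max (0*y.1+1*y.2) (min (1*y.1+0*y.2) (0*y.1+2*y.2)))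

lemma phiA {x : ℝ × ℝ} (h0 : 0 ≤ x.2) (h1 : x.2 ≤ x.1) :
    PhiF x = (x.1, x.2/2) := by
  simp only [PhiF]
  rw [min_eq_left (by linarith), max_eq_left (by linarith),
    max_eq_left (by linarith), min_eq_right (by linarith)]
  simp only [Prod.mk.injEq]
  constructor <;> ring

lemma phiB {x : ℝ × ℝ} (h1 : x.1 ≤ x.2) (h2 : 3*x.2 ≤ 4*x.1) :
    PhiF x = (x.2, 5*x.2/2 - 2*x.1) := by
  simp only [PhiF]
  rw [min_eq_left (by linarith), max_eq_right (by linarith),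
    max_eq_right (by linarith), min_eq_right (by linarith)]
  simp only [Prod.mk.injEq]
  constructor <;> ring

lemma phiC {x : ℝ × ℝ} (h0 : 0 ≤ x.1) (h1 : x.1 ≤ x.2) (h2 : 4*x.1 ≤ 3*x.2) :
    PhiF x = (4*x.1/3, x.2) := by
  simp only [PhiF]
  rw [min_eq_right (by linarith), max_eq_right (by linarith),
    max_eq_right (by linarith), min_eq_left (by linarith)]
  simp only [Prod.mk.injEq]
  constructor <;> ring

lemma gA {y : ℝ × ℝ} (h0 : 0 ≤ y.2) (h1 : 2*y.2 ≤ y.1) :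
    GF y = (y.1, 2*y.2) := by
  simp only [GF]
  rw [max_eq_right (by linarith), min_eq_left (by linarith),
    min_eq_right (by linarith), max_eq_right (by linarith)]
  simp only [Prod.mk.injEq]
  constructor <;> ring

lemma gB {y : ℝ × ℝ} (h1 : y.2 ≤ y.1) (h2 : y.1 ≤ 2*y.2) :
    GF y = (5*y.1/4 - y.2/2, y.1) := by
  simp only [GF]
  rw [max_eq_right (by linarith), min_eq_right (by linarith),
    min_eq_left (by linarith), max_eq_right (by linarith)]
  simp only [Prod.mk.injEq]
  constructor <;> ring

lemma gC {y : ℝ × ℝ} (h0 : 0 ≤ y.1) (h1 : y.1 ≤ y.2) :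
    GF y = (3*y.1/4, y.2) := by
  simp only [GF]
  rw [max_eq_left (by linarith), min_eq_right (by linarith),
    min_eq_left (by linarith), max_eq_left (by linarith)]
  simp only [Prod.mk.injEq]
  constructor <;> ring

lemma linLip (a b : ℝ) :
    LipschitzWith ((|a| + |b|).toNNReal) (fun x : ℝ × ℝ => a*x.1 + b*x.2) := by
  apply LipschitzWith.of_dist_le_mul
  intro p q
  have habs : 0 ≤ |a| + |b| := by positivity
  rw [Real.coe_toNNReal _ habs, Real.dist_eq, Prod.dist_eq, Real.dist_eq, Real.dist_eq]
  have h1 : |p.1 - q.1| ≤ max |p.1 - q.1| |p.2 - q.2| := le_max_left _ _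
  have h2 : |p.2 - q.2| ≤ max |p.1 - q.1| |p.2 - q.2| := le_max_right _ _
  have e : a*p.1 + b*p.2 - (a*q.1 + b*q.2) = a*(p.1-q.1) + b*(p.2-q.2) := by ring
  rw [e]
  calc |a*(p.1-q.1) + b*(p.2-q.2)| ≤ |a*(p.1-q.1)| + |b*(p.2-q.2)| := abs_add_le _ _
    _ = |a| * |p.1 - q.1| + |b| * |p.2 - q.2| := by rw [abs_mul, abs_mul]
    _ ≤ (|a| + |b|) * max |p.1 - q.1| |p.2 - q.2| := by
        nlinarith [abs_nonneg a, abs_nonneg b, abs_nonneg (p.1-q.1), abs_nonneg (p.2-q.2)]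

lemma phiLip : ∃ K : NNReal, LipschitzWith K PhiF :=
  ⟨_, (((linLip 1 0).max ((linLip 0 1).min (linLip (4/3) 0))).prodMk
      ((linLip 0 1).min ((linLip 0 (1/2)).max (linLip (-2) (5/2)))))⟩

lemma gLip : ∃ K : NNReal, LipschitzWith K GF :=
  ⟨_, (((linLip 1 0).min ((linLip (3/4) 0).max (linLip (5/4) (-(1/2))))).prodMk
      ((linLip 0 1).max ((linLip 1 0).min (linLip 0 2))))⟩

lemma mem_unitSq {x : ℝ × ℝ} :
    x ∈ unitSq ↔ 0 ≤ x.1 ∧ x.1 ≤ 1 ∧ 0 ≤ x.2 ∧ x.2 ≤ 1 := by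
  simp only [unitSq, Set.mem_setOf_eq, Set.mem_Icc]
  tauto

lemma mapsTo_phi : Set.MapsTo PhiF unitSq unitSq := by
  intro x hx
  rw [mem_unitSq] at hx
  obtain ⟨h1, h2, h3, h4⟩ := hx
  rcases le_total x.2 x.1 with h | h
  · rw [phiA h3 h, mem_unitSq]
    refine ⟨?_, ?_, ?_, ?_⟩ <;> (dsimp only; linarith)
  · rcases le_total (3*x.2) (4*x.1) with h' | h'
    · rw [phiB h h', mem_unitSq]
      refine ⟨?_, ?_, ?_, ?_⟩ <;> (dsimp only; linarith)
    · rw [phiC h1 h h', mem_unitSq]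
      refine ⟨?_, ?_, ?_, ?_⟩ <;> (dsimp only; linarith)

lemma mapsTo_g : Set.MapsTo GF unitSq unitSq := by
  intro y hy
  rw [mem_unitSq] at hy
  obtain ⟨h1, h2, h3, h4⟩ := hy
  rcases le_total (2*y.2) y.1 with h | h
  · rw [gA h3 h, mem_unitSq]
    refine ⟨?_, ?_, ?_, ?_⟩ <;> (dsimp only; linarith)
  · rcases le_total y.2 y.1 with h' | h'
    · rw [gB h' h, mem_unitSq]
      refine ⟨?_, ?_, ?_, ?_⟩ <;> (dsimp only; linarith)
    · rw [gC h1 h', mem_unitSq]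
      refine ⟨?_, ?_, ?_, ?_⟩ <;> (dsimp only; linarith)

lemma leftInv : ∀ x ∈ unitSq, GF (PhiF x) = x := by
  intro x hx
  rw [mem_unitSq] at hx
  obtain ⟨h1, h2, h3, h4⟩ := hx
  rcases le_total x.2 x.1 with h | h
  · rw [phiA h3 h,
      gA (y := (x.1, x.2/2)) (show (0:ℝ) ≤ x.2/2 by linarith) (show 2*(x.2/2) ≤ x.1 by linarith)]
    rw [Prod.ext_iff]
    exact ⟨rfl, by show 2*(x.2/2) = x.2; ring⟩
  · rcases le_total (3*x.2) (4*x.1) with h' | h'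
    · rw [phiB h h',
        gB (y := (x.2, 5*x.2/2 - 2*x.1)) (show 5*x.2/2 - 2*x.1 ≤ x.2 by linarith)
          (show x.2 ≤ 2*(5*x.2/2 - 2*x.1) by linarith)]
      rw [Prod.ext_iff]
      exact ⟨by show 5*x.2/4 - (5*x.2/2 - 2*x.1)/2 = x.1; ring, rfl⟩
    · rw [phiC h1 h h',
        gC (y := (4*x.1/3, x.2)) (show (0:ℝ) ≤ 4*x.1/3 by linarith)
          (show 4*x.1/3 ≤ x.2 by linarith)]
      rw [Prod.ext_iff]
      exact ⟨by show 3*(4*x.1/3)/4 = x.1; ring, rfl⟩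

lemma rightInv : ∀ y ∈ unitSq, PhiF (GF y) = y := by
  intro y hy
  rw [mem_unitSq] at hy
  obtain ⟨h1, h2, h3, h4⟩ := hy
  rcases le_total (2*y.2) y.1 with h | h
  · rw [gA h3 h,
      phiA (x := (y.1, 2*y.2)) (show (0:ℝ) ≤ 2*y.2 by linarith) (show 2*y.2 ≤ y.1 by linarith)]
    rw [Prod.ext_iff]
    exact ⟨rfl, by show 2*y.2/2 = y.2; ring⟩
  · rcases le_total y.2 y.1 with h' | h'
    · rw [gB h' h,
        phiB (x := (5*y.1/4 - y.2/2, y.1)) (show 5*y.1/4 - y.2/2 ≤ y.1 by linarith)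
          (show 3*y.1 ≤ 4*(5*y.1/4 - y.2/2) by linarith)]
      rw [Prod.ext_iff]
      exact ⟨rfl, by show 5*y.1/2 - 2*(5*y.1/4 - y.2/2) = y.2; ring⟩
    · rw [gC h1 h',
        phiC (x := (3*y.1/4, y.2)) (show (0:ℝ) ≤ 3*y.1/4 by linarith)
          (show 3*y.1/4 ≤ y.2 by linarith) (show 4*(3*y.1/4) ≤ 3*y.2 by linarith)]
      rw [Prod.ext_iff]
      exact ⟨by show 4*(3*y.1/4)/3 = y.1; ring, rfl⟩

theorem exists_lipschitz_bijection_of_square_not_preserving_vertices :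
    ∃ (Φ g : ℝ × ℝ → ℝ × ℝ) (K K' : NNReal),
      LipschitzOnWith K Φ unitSq ∧
      Set.BijOn Φ unitSq unitSq ∧
      Set.InvOn g Φ unitSq unitSq ∧
      LipschitzOnWith K' g unitSq ∧
      Φ (1, 1) = (1, 1/2) ∧
      Φ '' sqVertices ≠ sqVertices := by
  obtain ⟨K, hK⟩ := phiLip
  obtain ⟨K', hK'⟩ := gLip
  have hinv : Set.InvOn GF PhiF unitSq unitSq := ⟨leftInv, rightInv⟩
  have hbij : Set.BijOn PhiF unitSq unitSq := hinv.bijOn mapsTo_phi mapsTo_g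
  have hval : PhiF (1, 1) = (1, 1/2) := by
    have := phiA (x := ((1:ℝ), (1:ℝ))) (by norm_num) (by norm_num)
    rw [this]
  refine ⟨PhiF, GF, K, K', hK.lipschitzOnWith, hbij, hinv, hK'.lipschitzOnWith, hval, ?_⟩
  intro hEq
  have hmem : ((1:ℝ), (1:ℝ)/2) ∈ PhiF '' sqVertices := by
    refine ⟨(1, 1), ?_, hval⟩
    simp [sqVertices]
  rw [hEq] at hmem
  simp only [sqVertices, Set.mem_insert_iff, Set.mem_singleton_iff, Prod.mk.injEq] at hmem
  norm_num at hmem
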